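/- For any positive integer k, any permutations α and β, and any set of permutations X, the classes I_k ∩ Av(X, α ⊕ 1 ⊕ β) and I_k ∩ Av(X, α ⊕ 1 ⊕ 1 ⊕ β) have the same growth rate. -/

import Mathlib

open Filter

/-- `f` is an embedding (involvement) of the permutation `α` into the permutation `π`:
it is strictly monotone on positions and preserves the relative order of values. -/
def IsEmbedding {m n : ℕ} (α : Equiv.Perm (Fin m)) (π : Equiv.Perm (Fin n))
    (f : Fin m → Fin n) : Prop :=
  StrictMono f ∧ ∀ a b : Fin m, α a < α b ↔ π (f a) < π (f b)

/-- A permutation of arbitrary (finite) length. -/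
abbrev PermSig := Σ n : ℕ, Equiv.Perm (Fin n)

/-- `α ≼ π`: the pattern `α` is involved in `π`. -/
def Involves (α π : PermSig) : Prop := ∃ f, IsEmbedding α.2 π.2 f

/-- The class of permutations avoiding every pattern in `X`. -/
def AvClass (X : Set PermSig) : Set PermSig := {π | ∀ α ∈ X, ¬ Involves α π}

/-- A pattern class: a set of permutations closed downward under involvement. -/
def IsPatternClass (C : Set PermSig) : Prop :=
  ∀ α π : PermSig, Involves α π → π ∈ C → α ∈ C

/-- The number of permutations of length `n` in `C`. -/
noncomputable def classCount (C : Set PermSig) (n : ℕ) : ℕ :=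
  Nat.card {π : Equiv.Perm (Fin n) // (⟨n, π⟩ : PermSig) ∈ C}

/-- The (upper) growth rate `s(C) = limsup |C ∩ S_n|^{1/n}`, valued in `ℝ≥0∞`. -/
noncomputable def growthRate (C : Set PermSig) : ENNReal :=
  Filter.atTop.limsup fun n : ℕ => (classCount C n : ENNReal) ^ (1 / (n : ℝ))

/-- `π` contains a decreasing subsequence of length `k`. -/
def HasDecSeq {n : ℕ} (π : Equiv.Perm (Fin n)) (k : ℕ) : Prop :=
  ∃ q : Fin k → Fin n, StrictMono q ∧ StrictAnti fun i => π (q i)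

/-- The class `I_k = Av(δ_{k+1})` of permutations with no decreasing
subsequence of length `k+1`. -/
def IkClass (k : ℕ) : Set PermSig := {π | ¬ HasDecSeq π.2 (k + 1)}

/-- `f` and `g` witness `π` as a merge of `α` and `β`: both are embeddings and
their ranges partition the points of `π`. -/
def IsMergeVia {a b n : ℕ} (α : Equiv.Perm (Fin a)) (β : Equiv.Perm (Fin b))
    (π : Equiv.Perm (Fin n)) (f : Fin a → Fin n) (g : Fin b → Fin n) : Prop :=
  IsEmbedding α π f ∧ IsEmbedding β π g ∧ ∀ x : Fin n, (∃ i, f i = x) ↔ ¬∃ j, g j = x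

/-- The merge `M(C, D)` of two sets of permutations. -/
def MergeClass (C D : Set PermSig) : Set PermSig :=
  {π | ∃ α ∈ C, ∃ β ∈ D, ∃ f g, IsMergeVia α.2 β.2 π.2 f g}

/-- Number of indices `c` with `c+1 < n` such that exactly one of the points
`c`, `c+1` lies in `S`. -/
noncomputable def posChanges {n : ℕ} (S : Set (Fin n)) : ℕ :=
  Set.ncard {c : Fin n | ∃ h : (c : ℕ) + 1 < n, ¬ (c ∈ S ↔ (⟨(c : ℕ) + 1, h⟩ : Fin n) ∈ S)}

/-- Total number of type changes, by position and by value, of the merge of `π`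
whose first part occupies the set of positions `S`. -/
noncomputable def typeChanges {n : ℕ} (π : Equiv.Perm (Fin n)) (S : Set (Fin n)) : ℕ :=
  posChanges S + posChanges ((fun x => π x) '' S)

/-- The `B`-bounded merge `M_B(C, D)`: merges of a member of `C` with a member of
`D` having at most `B` type changes in total, by position or by value. -/
def BMergeClass (B : ℕ) (C D : Set PermSig) : Set PermSig :=
  {π | ∃ α ∈ C, ∃ β ∈ D, ∃ f g, IsMergeVia α.2 β.2 π.2 f g ∧
    typeChanges π.2 (Set.range f) ≤ B}

/-- The direct sum of two permutations. -/
def dsum {a b : ℕ} (α : Equiv.Perm (Fin a)) (β : Equiv.Perm (Fin b)) :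
    Equiv.Perm (Fin (a + b)) :=
  finSumFinEquiv.symm.trans ((Equiv.sumCongr α β).trans finSumFinEquiv)

/-- The direct sum `α ⊕ β` of two permutations of arbitrary lengths. -/
def DSum (α β : PermSig) : PermSig := ⟨α.1 + β.1, dsum α.2 β.2⟩

/-- The increasing permutation `ι_m` of length `m`. -/
def iotaSig (m : ℕ) : PermSig := ⟨m, 1⟩

/-- The direct sum of a list of permutations. -/
def DSumList (l : List PermSig) : PermSig := l.foldr DSum (iotaSig 0)

/-- A (nonempty) permutation that is not the direct sum of two nonempty permutations. -/
def PlusIndec (ρ : PermSig) : Prop :=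
  ρ.1 ≠ 0 ∧ ∀ α β : PermSig, α.1 ≠ 0 → β.1 ≠ 0 → ρ ≠ DSum α β

/-- `ρ = red(π)`: writing `π = ι_{m₀} ⊕ ρ₁ ⊕ ι_{m₁} ⊕ ⋯ ⊕ ρ_c ⊕ ι_{m_c}` with each
`ρ_i` plus indecomposable of length at least 2, the rigid reduction of `π` is
`ρ = ρ₁ ⊕ ⋯ ⊕ ρ_c`. -/
def IsRigidReductionOf (ρ π : PermSig) : Prop :=
  ∃ (m₀ : ℕ) (pairs : List (PermSig × ℕ)),
    (∀ p ∈ pairs, PlusIndec p.1 ∧ 2 ≤ p.1.1) ∧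
    π = DSum (iotaSig m₀) (DSumList (pairs.map fun p => DSum p.1 (iotaSig p.2))) ∧
    ρ = DSumList (pairs.map Prod.fst)

section Emb
variable {a b c n m p : ℕ} {α : Equiv.Perm (Fin a)} {β : Equiv.Perm (Fin b)}
  {γ : Equiv.Perm (Fin c)} {π : Equiv.Perm (Fin n)} {ρ : Equiv.Perm (Fin m)}

theorem IsEmbedding.id (α : Equiv.Perm (Fin a)) : IsEmbedding α α id :=
  ⟨strictMono_id, fun _ _ => Iff.rfl⟩

theorem IsEmbedding.comp {f : Fin a → Fin m} {g : Fin m → Fin n}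
    (hf : IsEmbedding α ρ f) (hg : IsEmbedding ρ π g) : IsEmbedding α π (g ∘ f) :=
  ⟨hg.1.comp hf.1, fun i j => (hf.2 i j).trans (hg.2 (f i) (f j))⟩

theorem Involves.trans {A B C : PermSig} (h1 : Involves A B) (h2 : Involves B C) :
    Involves A C := by
  obtain ⟨f, hf⟩ := h1; obtain ⟨g, hg⟩ := h2; exact ⟨g ∘ f, hf.comp hg⟩

@[simp] theorem dsum_castAdd (i : Fin a) :
    dsum α β (Fin.castAdd b i) = Fin.castAdd b (α i) := by
  simp [dsum]

@[simp] theorem dsum_natAdd (j : Fin b) :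
    dsum α β (Fin.natAdd a j) = Fin.natAdd a (β j) := by
  simp [dsum]

theorem Fin.eq_castAdd_or_natAdd' {a b : ℕ} (x : Fin (a + b)) :
    (∃ i, x = Fin.castAdd b i) ∨ ∃ j, x = Fin.natAdd a j :=
  Fin.addCases (fun i => .inl ⟨i, rfl⟩) (fun j => .inr ⟨j, rfl⟩) x

theorem IsEmbedding.singleton (π : Equiv.Perm (Fin n)) (x : Fin n) :
    IsEmbedding (1 : Equiv.Perm (Fin 1)) π (fun _ => x) := by
  constructor
  · intro i j hij; exact absurd (Subsingleton.elim i j) (ne_of_lt hij)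
  · intro i j
    rw [Subsingleton.elim i j]
    simp

/-- glue two embeddings into an embedding of a direct sum -/
theorem IsEmbedding.glue {f : Fin a → Fin n} {g : Fin b → Fin n}
    (hf : IsEmbedding α π f) (hg : IsEmbedding β π g)
    (hpos : ∀ i j, f i < g j) (hval : ∀ i j, π (f i) < π (g j)) :
    IsEmbedding (dsum α β) π (fun x => Sum.elim f g (finSumFinEquiv.symm x)) := by
  constructor
  · intro x y hxy
    rcases Fin.eq_castAdd_or_natAdd' x with ⟨i, rfl⟩ | ⟨i, rfl⟩ <;>
      rcases Fin.eq_castAdd_or_natAdd' y with ⟨j, rfl⟩ | ⟨j, rfl⟩ <;>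
        simp only [finSumFinEquiv_symm_apply_castAdd, finSumFinEquiv_symm_apply_natAdd,
          Sum.elim_inl, Sum.elim_inr]
    · exact hf.1 (by simp only [Fin.lt_def, Fin.coe_castAdd] at hxy ⊢; exact hxy)
    · exact hpos i j
    · exact absurd hxy (by simp only [Fin.lt_def, Fin.coe_castAdd, Fin.coe_natAdd, not_lt]; omega)
    · exact hg.1 (by simp only [Fin.lt_def, Fin.coe_natAdd] at hxy ⊢; omega)
  · intro x y
    rcases Fin.eq_castAdd_or_natAdd' x with ⟨i, rfl⟩ | ⟨i, rfl⟩ <;>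
      rcases Fin.eq_castAdd_or_natAdd' y with ⟨j, rfl⟩ | ⟨j, rfl⟩ <;>
        simp only [finSumFinEquiv_symm_apply_castAdd, finSumFinEquiv_symm_apply_natAdd,
          Sum.elim_inl, Sum.elim_inr, dsum_castAdd, dsum_natAdd]
    · rw [← hf.2]; simp only [Fin.lt_def, Fin.coe_castAdd]
    · simp only [Fin.lt_def, Fin.coe_castAdd, Fin.coe_natAdd]
      constructor
      · intro _; exact hval i j
      · intro _; omega
    · simp only [Fin.lt_def, Fin.coe_castAdd, Fin.coe_natAdd]
      constructor
      · omega
      · intro h; exact absurd (hval j i) (by omega)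
    · rw [← hg.2]; simp only [Fin.lt_def, Fin.coe_natAdd, Nat.add_lt_add_iff_left]
  

theorem IsEmbedding.castAdd : IsEmbedding α (dsum α β) (Fin.castAdd b) := by
  constructor
  · exact fun i j h => by simp only [Fin.lt_def, Fin.coe_castAdd]; exact h
  · intro i j
    simp only [dsum_castAdd, Fin.lt_def, Fin.coe_castAdd]

theorem IsEmbedding.natAdd : IsEmbedding β (dsum α β) (Fin.natAdd a) := by
  constructor
  · exact fun i j h => by
      simp only [Fin.lt_def, Fin.coe_natAdd, Nat.add_lt_add_iff_left]; exact h
  · intro i j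
    simp only [dsum_natAdd, Fin.lt_def, Fin.coe_natAdd, Nat.add_lt_add_iff_left]

end Emb


section Restrict

variable {n m : ℕ}

/-- image of `R` under `π` as a `Finset` -/
def valSet (π : Equiv.Perm (Fin n)) (R : Finset (Fin n)) : Finset (Fin n) :=
  R.image π

theorem valSet_card (π : Equiv.Perm (Fin n)) (R : Finset (Fin n)) (h : R.card = m) :
    (valSet π R).card = m := by
  rw [valSet, Finset.card_image_of_injective _ π.injective, h]

theorem mem_valSet (π : Equiv.Perm (Fin n)) (R : Finset (Fin n)) (i : Fin n) (hi : i ∈ R) :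
    π i ∈ valSet π R := Finset.mem_image_of_mem _ hi

/-- the pattern of `π` on the set of positions `R` -/
noncomputable def restrictPerm (π : Equiv.Perm (Fin n)) (R : Finset (Fin n))
    (h : R.card = m) : Equiv.Perm (Fin m) :=
  Equiv.ofBijective
    (fun i => ((valSet π R).orderIsoOfFin (valSet_card π R h)).symm
      ⟨π (R.orderEmbOfFin h i), mem_valSet π R _ (Finset.orderEmbOfFin_mem R h i)⟩)
    (by
      rw [← Finite.injective_iff_bijective]
      intro i j hij
      have := congrArg ((valSet π R).orderIsoOfFin (valSet_card π R h)) hij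
      simp only [OrderIso.apply_symm_apply, Subtype.mk.injEq] at this
      exact (R.orderEmbOfFin h).injective (π.injective this))

theorem orderEmbOfFin_orderIsoOfFin_symm {α : Type*} [LinearOrder α] (s : Finset α)
    {k : ℕ} (h : s.card = k) (x : {v // v ∈ s}) :
    s.orderEmbOfFin h ((s.orderIsoOfFin h).symm x) = ↑x := by
  rw [← Finset.coe_orderIsoOfFin_apply, OrderIso.apply_symm_apply]

theorem restrictPerm_apply (π : Equiv.Perm (Fin n)) (R : Finset (Fin n)) (h : R.card = m)
    (i : Fin m) :
    π (R.orderEmbOfFin h i) =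
      (valSet π R).orderEmbOfFin (valSet_card π R h) (restrictPerm π R h i) := by
  have h1 : (restrictPerm π R h) i = ((valSet π R).orderIsoOfFin (valSet_card π R h)).symm
      ⟨π (R.orderEmbOfFin h i), mem_valSet π R _ (Finset.orderEmbOfFin_mem R h i)⟩ := rfl
  rw [h1, orderEmbOfFin_orderIsoOfFin_symm]

theorem restrictPerm_isEmbedding (π : Equiv.Perm (Fin n)) (R : Finset (Fin n))
    (h : R.card = m) : IsEmbedding (restrictPerm π R h) π (R.orderEmbOfFin h) := by
  constructor
  · exact (R.orderEmbOfFin h).strictMono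
  · intro i j
    rw [← ((valSet π R).orderEmbOfFin (valSet_card π R h)).strictMono.lt_iff_lt,
      ← restrictPerm_apply, ← restrictPerm_apply]

theorem involves_restrictPerm (π : Equiv.Perm (Fin n)) (R : Finset (Fin n)) (h : R.card = m) :
    Involves ⟨m, restrictPerm π R h⟩ ⟨n, π⟩ :=
  ⟨R.orderEmbOfFin h, restrictPerm_isEmbedding π R h⟩

end Restrict


section Closure

theorem hasDecSeq_of_embedding {m n l : ℕ} {lam : Equiv.Perm (Fin m)}
    {π : Equiv.Perm (Fin n)} {f : Fin m → Fin n} (hf : IsEmbedding lam π f)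
    (h : HasDecSeq lam l) : HasDecSeq π l := by
  obtain ⟨q, hq1, hq2⟩ := h
  refine ⟨f ∘ q, hf.1.comp hq1, fun i j hij => ?_⟩
  exact (hf.2 (q j) (q i)).mp (hq2 hij)

theorem IkClass_isPatternClass (k : ℕ) : IsPatternClass (IkClass k) := by
  intro A P hAP hP hdec
  obtain ⟨f, hf⟩ := hAP
  exact hP (hasDecSeq_of_embedding hf hdec)

theorem AvClass_isPatternClass (X : Set PermSig) : IsPatternClass (AvClass X) := by
  intro A P hAP hP x hx hxA
  exact hP x hx (hxA.trans hAP)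

theorem inter_isPatternClass {C D : Set PermSig} (hC : IsPatternClass C)
    (hD : IsPatternClass D) : IsPatternClass (C ∩ D) :=
  fun A P h hP => ⟨hC A P h hP.1, hD A P h hP.2⟩

end Closure

section Structural

variable {aN bN n : ℕ} (A : Equiv.Perm (Fin aN)) (B : Equiv.Perm (Fin bN))

/-- the pattern `α ⊕ 1 ⊕ β` -/
abbrev sigmaPerm : Equiv.Perm (Fin (aN + (1 + bN))) := dsum A (dsum 1 B)

/-- the pattern `α ⊕ 1 ⊕ 1 ⊕ β` -/
abbrev tauPerm : Equiv.Perm (Fin (aN + (1 + (1 + bN)))) := dsum A (dsum 1 (dsum 1 B))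

/-- the index of the middle `1` in `α ⊕ 1 ⊕ β` -/
abbrev midIdx (aN bN : ℕ) : Fin (aN + (1 + bN)) := Fin.natAdd aN (Fin.castAdd bN 0)

theorem sigmaPerm_midIdx : sigmaPerm A B (midIdx aN bN) = midIdx aN bN := by
  show dsum A (dsum 1 B) (Fin.natAdd aN (Fin.castAdd bN (0 : Fin 1))) = _
  rw [dsum_natAdd, dsum_castAdd]
  rfl

theorem dsum_mono_right {xN yN : ℕ} {X : Equiv.Perm (Fin xN)} {Y : Equiv.Perm (Fin yN)}
    {g : Fin xN → Fin yN} (hg : IsEmbedding X Y g) :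
    IsEmbedding (dsum A X) (dsum A Y)
      (fun x => Sum.elim (Fin.castAdd yN) (fun j => Fin.natAdd aN (g j))
        (finSumFinEquiv.symm x)) := by
  refine IsEmbedding.glue IsEmbedding.castAdd (hg.comp IsEmbedding.natAdd) ?_ ?_
  · intro i j; simp [Fin.lt_def]; omega
  · intro i j
    rw [dsum_castAdd, dsum_natAdd]
    simp [Fin.lt_def]; omega

/-- `α ⊕ 1 ⊕ β ≼ α ⊕ 1 ⊕ 1 ⊕ β` -/
theorem sigma_involves_tau :
    Involves ⟨aN + (1 + bN), sigmaPerm A B⟩ ⟨aN + (1 + (1 + bN)), tauPerm A B⟩ :=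
  ⟨_, dsum_mono_right A (IsEmbedding.natAdd (α := (1 : Equiv.Perm (Fin 1))))⟩

/-- Claim A: two middle points of copies of `σ` cannot be in increasing position
AND increasing value, if `π` avoids `τ`. -/
theorem middle_points_dec {π : Equiv.Perm (Fin n)}
    (hτ : ¬ ∃ h, IsEmbedding (tauPerm A B) π h)
    {f g : Fin (aN + (1 + bN)) → Fin n}
    (hf : IsEmbedding (sigmaPerm A B) π f) (hg : IsEmbedding (sigmaPerm A B) π g)
    {p q : Fin n} (hfp : f (midIdx aN bN) = p) (hgq : g (midIdx aN bN) = q)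
    (hpq : p < q) : π q < π p := by
  by_contra hval
  have hne : π p ≠ π q := fun h => absurd (π.injective h) (ne_of_lt hpq)
  have hπpq : π p < π q := lt_of_le_of_ne (not_lt.mp hval) hne
  -- embedding of β into π through g
  have eβ : IsEmbedding B π (fun j => g (Fin.natAdd aN (Fin.natAdd 1 j))) :=
    ((IsEmbedding.natAdd (α := (1 : Equiv.Perm (Fin 1)))).comp
      (IsEmbedding.natAdd (α := A))).comp hg
  -- q < g (natAdd (natAdd j)) in position and value
  have hq_pos : ∀ j : Fin bN, q < g (Fin.natAdd aN (Fin.natAdd 1 j)) := by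
    intro j
    rw [← hgq]
    exact hg.1 (by simp [Fin.lt_def, midIdx])
  have hq_val : ∀ j : Fin bN, π q < π (g (Fin.natAdd aN (Fin.natAdd 1 j))) := by
    intro j
    rw [← hgq]
    refine (hg.2 _ _).mp ?_
    rw [sigmaPerm_midIdx, dsum_natAdd, dsum_natAdd]
    simp [Fin.lt_def, midIdx]
  have glue1 : IsEmbedding (dsum (1 : Equiv.Perm (Fin 1)) B) π
      (fun x => Sum.elim (fun _ => q) (fun j => g (Fin.natAdd aN (Fin.natAdd 1 j)))
        (finSumFinEquiv.symm x)) :=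
    (IsEmbedding.singleton π q).glue eβ (fun _ j => hq_pos j) (fun _ j => hq_val j)
  have glue2 : IsEmbedding (dsum (1 : Equiv.Perm (Fin 1)) (dsum (1 : Equiv.Perm (Fin 1)) B)) π
      (fun x => Sum.elim (fun _ => p)
        (fun y => Sum.elim (fun _ => q)
          (fun j => g (Fin.natAdd aN (Fin.natAdd 1 j))) (finSumFinEquiv.symm y))
        (finSumFinEquiv.symm x)) := by
    refine (IsEmbedding.singleton π p).glue glue1 ?_ ?_
    · intro _ y
      rcases Fin.eq_castAdd_or_natAdd' y with ⟨i, rfl⟩ | ⟨j, rfl⟩ <;>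
        simp only [finSumFinEquiv_symm_apply_castAdd, finSumFinEquiv_symm_apply_natAdd,
          Sum.elim_inl, Sum.elim_inr]
      · exact hpq
      · exact hpq.trans (hq_pos j)
    · intro _ y
      rcases Fin.eq_castAdd_or_natAdd' y with ⟨i, rfl⟩ | ⟨j, rfl⟩ <;>
        simp only [finSumFinEquiv_symm_apply_castAdd, finSumFinEquiv_symm_apply_natAdd,
          Sum.elim_inl, Sum.elim_inr]
      · exact hπpq
      · exact hπpq.trans (hq_val j)
  -- p is above and right of the α-part of f
  have hp_pos : ∀ i : Fin aN, f (Fin.castAdd (1 + bN) i) < p := by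
    intro i
    rw [← hfp]
    exact hf.1 (by simp only [Fin.lt_def, Fin.coe_castAdd, Fin.coe_natAdd]; omega)
  have hp_val : ∀ i : Fin aN, π (f (Fin.castAdd (1 + bN) i)) < π p := by
    intro i
    rw [← hfp]
    refine (hf.2 _ _).mp ?_
    rw [sigmaPerm_midIdx, dsum_castAdd]
    simp only [Fin.lt_def, Fin.coe_castAdd, midIdx, Fin.coe_natAdd]
    omega
  have eα : IsEmbedding A π (fun i => f (Fin.castAdd (1 + bN) i)) :=
    (IsEmbedding.castAdd (β := dsum 1 B)).comp hf
  have glue3 : IsEmbedding (tauPerm A B) π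
      (fun x => Sum.elim (fun i => f (Fin.castAdd (1 + bN) i))
        (fun z => Sum.elim (fun _ => p)
          (fun y => Sum.elim (fun _ => q)
            (fun j => g (Fin.natAdd aN (Fin.natAdd 1 j))) (finSumFinEquiv.symm y))
          (finSumFinEquiv.symm z))
        (finSumFinEquiv.symm x)) := by
    refine eα.glue glue2 ?_ ?_
    · intro i y
      rcases Fin.eq_castAdd_or_natAdd' y with ⟨u, rfl⟩ | ⟨v, rfl⟩ <;>
        simp only [finSumFinEquiv_symm_apply_castAdd, finSumFinEquiv_symm_apply_natAdd,
          Sum.elim_inl, Sum.elim_inr]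
      · exact hp_pos i
      · rcases Fin.eq_castAdd_or_natAdd' v with ⟨u, rfl⟩ | ⟨w, rfl⟩ <;>
          simp only [finSumFinEquiv_symm_apply_castAdd, finSumFinEquiv_symm_apply_natAdd,
            Sum.elim_inl, Sum.elim_inr]
        · exact (hp_pos i).trans hpq
        · exact ((hp_pos i).trans hpq).trans (hq_pos w)
    · intro i y
      rcases Fin.eq_castAdd_or_natAdd' y with ⟨u, rfl⟩ | ⟨v, rfl⟩ <;>
        simp only [finSumFinEquiv_symm_apply_castAdd, finSumFinEquiv_symm_apply_natAdd,
          Sum.elim_inl, Sum.elim_inr]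
      · exact hp_val i
      · rcases Fin.eq_castAdd_or_natAdd' v with ⟨u, rfl⟩ | ⟨w, rfl⟩ <;>
          simp only [finSumFinEquiv_symm_apply_castAdd, finSumFinEquiv_symm_apply_natAdd,
            Sum.elim_inl, Sum.elim_inr]
        · exact (hp_val i).trans hπpq
        · exact ((hp_val i).trans hπpq).trans (hq_val w)
  exact hτ ⟨_, glue3⟩

end Structural


section MidSet

variable {aN bN n : ℕ} (A : Equiv.Perm (Fin aN)) (B : Equiv.Perm (Fin bN))
  (π : Equiv.Perm (Fin n))

/-- the set of points of `π` which are the middle `1` of some copy of `α ⊕ 1 ⊕ β` -/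
noncomputable def midSet : Finset (Fin n) :=
  @Finset.filter _
    (fun pt => ∃ f, IsEmbedding (sigmaPerm A B) π f ∧ f (midIdx aN bN) = pt)
    (Classical.decPred _) Finset.univ

theorem mem_midSet (x : Fin n) :
    x ∈ midSet A B π ↔ ∃ f, IsEmbedding (sigmaPerm A B) π f ∧ f (midIdx aN bN) = x := by
  classical
  simp [midSet]

theorem midSet_card_le {k : ℕ} (hk : ¬ HasDecSeq π (k + 1))
    (hτ : ¬ ∃ h, IsEmbedding (tauPerm A B) π h) : (midSet A B π).card ≤ k := by
  by_contra hcard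
  obtain ⟨S, hS, hScard⟩ := Finset.exists_subset_card_eq
    ((not_le.mp hcard : k < (midSet A B π).card) : k + 1 ≤ (midSet A B π).card)
  apply hk
  refine ⟨S.orderEmbOfFin hScard, (S.orderEmbOfFin hScard).strictMono, ?_⟩
  intro i j hij
  have hi := hS (Finset.orderEmbOfFin_mem S hScard i)
  have hj := hS (Finset.orderEmbOfFin_mem S hScard j)
  rw [mem_midSet] at hi hj
  obtain ⟨f, hf, hfi⟩ := hi
  obtain ⟨g, hg, hgj⟩ := hj
  exact middle_points_dec A B hτ hf hg hfi hgj ((S.orderEmbOfFin hScard).strictMono hij)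

theorem restrict_avoids_sigma {m : ℕ} (hτ : ¬ ∃ h, IsEmbedding (tauPerm A B) π h)
    (h : ((midSet A B π)ᶜ).card = m) :
    ¬ ∃ e, IsEmbedding (sigmaPerm A B) (restrictPerm π (midSet A B π)ᶜ h) e := by
  rintro ⟨e, he⟩
  have hemb := he.comp (restrictPerm_isEmbedding π (midSet A B π)ᶜ h)
  have hmem : ((midSet A B π)ᶜ.orderEmbOfFin h) (e (midIdx aN bN)) ∈ midSet A B π := by
    rw [mem_midSet]
    exact ⟨_, hemb, rfl⟩
  have : ((midSet A B π)ᶜ.orderEmbOfFin h) (e (midIdx aN bN)) ∈ (midSet A B π)ᶜ :=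
    Finset.orderEmbOfFin_mem _ h _
  rw [Finset.mem_compl] at this
  exact this hmem

end MidSet

section SigLevel

variable (k : ℕ) (α β : PermSig) (X : Set PermSig)

/-- the pattern `α ⊕ 1 ⊕ β` as a `PermSig` -/
def sigS : PermSig := DSum α (DSum (iotaSig 1) β)

/-- the pattern `α ⊕ 1 ⊕ 1 ⊕ β` as a `PermSig` -/
def tauS : PermSig := DSum α (DSum (iotaSig 1) (DSum (iotaSig 1) β))

theorem sigS_involves_tauS : Involves (sigS α β) (tauS α β) :=
  sigma_involves_tau α.2 β.2

/-- the small class `C = I_k ∩ Av(X ∪ {α ⊕ 1 ⊕ β})` -/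
def CClass : Set PermSig := IkClass k ∩ AvClass (X ∪ {sigS α β})

/-- the large class `D = I_k ∩ Av(X ∪ {α ⊕ 1 ⊕ 1 ⊕ β})` -/
def DClass : Set PermSig := IkClass k ∩ AvClass (X ∪ {tauS α β})

theorem CClass_isPatternClass : IsPatternClass (CClass k α β X) :=
  inter_isPatternClass (IkClass_isPatternClass k) (AvClass_isPatternClass _)

theorem CClass_subset_DClass : CClass k α β X ⊆ DClass k α β X := by
  rintro P ⟨h1, h2⟩
  refine ⟨h1, fun x hx hinv => ?_⟩
  rcases hx with hx | hx
  · exact h2 x (Set.mem_union_left _ hx) hinv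
  · rw [Set.mem_singleton_iff] at hx
    subst hx
    exact h2 (sigS α β) (Set.mem_union_right _ rfl)
      ((sigS_involves_tauS α β).trans hinv)

/-- the main structural result: deleting the middle points of a
`τ`-avoider yields a `σ`-avoider -/
theorem restrict_mem_CClass {n m : ℕ} {π : Equiv.Perm (Fin n)}
    (hπ : (⟨n, π⟩ : PermSig) ∈ DClass k α β X)
    (h : ((midSet α.2 β.2 π)ᶜ).card = m) :
    (⟨m, restrictPerm π (midSet α.2 β.2 π)ᶜ h⟩ : PermSig) ∈ CClass k α β X := by
  obtain ⟨h1, h2⟩ := hπ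
  have hinv := involves_restrictPerm π (midSet α.2 β.2 π)ᶜ h
  constructor
  · exact IkClass_isPatternClass k _ _ hinv h1
  · intro x hx
    rcases hx with hx | hx
    · exact AvClass_isPatternClass _ _ _ hinv
        (fun y hy => h2 y (Set.mem_union_left _ hy)) x hx
    · rw [Set.mem_singleton_iff] at hx
      subst hx
      have hτ : ¬ ∃ hh, IsEmbedding (tauPerm α.2 β.2) π hh :=
        h2 (tauS α β) (Set.mem_union_right _ rfl)
      exact restrict_avoids_sigma α.2 β.2 π hτ h

theorem midSet_card_le_k {n : ℕ} {π : Equiv.Perm (Fin n)}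
    (hπ : (⟨n, π⟩ : PermSig) ∈ DClass k α β X) : (midSet α.2 β.2 π).card ≤ k := by
  obtain ⟨h1, h2⟩ := hπ
  exact midSet_card_le α.2 β.2 π h1
    (h2 (tauS α β) (Set.mem_union_right _ rfl))

end SigLevel


section CountingHelpers

theorem Nat.card_sigma' {ι : Type*} [Fintype ι] (F : ι → Type*) [∀ i, Finite (F i)] :
    Nat.card (Σ i, F i) = ∑ i, Nat.card (F i) := by
  classical
  haveI := fun i => Fintype.ofFinite (F i)
  simp [Nat.card_eq_fintype_card]

theorem orderEmbOfFin_val_eq {α : Type*} [LinearOrder α] {s s' : Finset α} (hss : s = s')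
    {k1 k2 : ℕ} (h1 : s.card = k1) (h2 : s'.card = k2) (i1 : Fin k1) (i2 : Fin k2)
    (hi : (i1 : ℕ) = (i2 : ℕ)) : s.orderEmbOfFin h1 i1 = s'.orderEmbOfFin h2 i2 := by
  subst hss
  have hk : k1 = k2 := h1.symm.trans h2
  subst hk
  have : i1 = i2 := Fin.ext hi
  subst this
  rfl

theorem subtype_perm_heq_apply {C : Set PermSig} {j j' : ℕ} (hjj : j = j')
    {ρ : Equiv.Perm (Fin j)} {ρ' : Equiv.Perm (Fin j')}
    {hρ : (⟨j, ρ⟩ : PermSig) ∈ C} {hρ' : (⟨j', ρ'⟩ : PermSig) ∈ C}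
    (h : HEq (⟨ρ, hρ⟩ : {γ : Equiv.Perm (Fin j) // (⟨j, γ⟩ : PermSig) ∈ C})
      (⟨ρ', hρ'⟩ : {γ : Equiv.Perm (Fin j') // (⟨j', γ⟩ : PermSig) ∈ C})) :
    ∀ (i : Fin j) (i' : Fin j'), (i : ℕ) = (i' : ℕ) → ((ρ i : Fin j) : ℕ) = ((ρ' i' : Fin j') : ℕ) := by
  subst hjj
  rw [heq_iff_eq, Subtype.mk.injEq] at h
  subst h
  intro i i' hii
  rw [Fin.ext hii]

theorem valSet_compl {n : ℕ} (π : Equiv.Perm (Fin n)) (G : Finset (Fin n)) :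
    valSet π Gᶜ = (valSet π G)ᶜ := by
  ext x
  simp only [valSet, Finset.mem_image, Finset.mem_compl]
  constructor
  · rintro ⟨y, hy, rfl⟩ ⟨z, hz, hzy⟩
    exact hy (π.injective hzy ▸ hz)
  · intro hx
    refine ⟨π.symm x, fun hmem => hx ⟨π.symm x, hmem, by simp⟩, by simp⟩

theorem valSet_congr {n : ℕ} {π π' : Equiv.Perm (Fin n)} {G : Finset (Fin n)}
    (h : ∀ x ∈ G, π x = π' x) : valSet π G = valSet π' G :=
  Finset.image_congr (fun x hx => h x hx)

end CountingHelpers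

section Counting

variable (k : ℕ) (α β : PermSig) (X : Set PermSig)

theorem classCount_DClass_le (n : ℕ) :
    classCount (DClass k α β X) n ≤
      (∑ j : Fin (k + 1), classCount (CClass k α β X) (n - (j : ℕ))) *
        ((n + 1) * (n + 1)) ^ k := by
  classical
  set C := CClass k α β X with hC
  set D := DClass k α β X with hD
  let T := (Σ j : Fin (k + 1),
      {γ : Equiv.Perm (Fin (n - (j : ℕ))) // (⟨n - (j : ℕ), γ⟩ : PermSig) ∈ C}) ×
    (Fin k → Fin (n + 1) × Fin (n + 1))
  have hres : ∀ π : {π : Equiv.Perm (Fin n) // (⟨n, π⟩ : PermSig) ∈ D},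
      ((midSet α.2 β.2 π.1)ᶜ).card = n - (midSet α.2 β.2 π.1).card := by
    intro π
    rw [Finset.card_compl, Fintype.card_fin]
  let Φ : {π : Equiv.Perm (Fin n) // (⟨n, π⟩ : PermSig) ∈ D} → T := fun π =>
    (⟨⟨(midSet α.2 β.2 π.1).card, Nat.lt_succ_of_le (midSet_card_le_k k α β X π.2)⟩,
      ⟨restrictPerm π.1 (midSet α.2 β.2 π.1)ᶜ (hres π),
        restrict_mem_CClass k α β X π.2 (hres π)⟩⟩,
     fun i => if h : (i : ℕ) < (midSet α.2 β.2 π.1).card then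
        (Fin.castSucc ((midSet α.2 β.2 π.1).orderEmbOfFin rfl ⟨(i : ℕ), h⟩),
         Fin.castSucc (π.1 ((midSet α.2 β.2 π.1).orderEmbOfFin rfl ⟨(i : ℕ), h⟩)))
      else (0, 0))
  have hinj : Function.Injective Φ := by
    rintro ⟨π, hπ⟩ ⟨π', hπ'⟩ heq
    have hsig := congrArg Prod.fst heq
    have hfun := congrArg Prod.snd heq
    have hcard : (midSet α.2 β.2 π).card = (midSet α.2 β.2 π').card :=
      congrArg (fun t : T => ((t.1.1 : Fin (k + 1)) : ℕ)) heq
    set G := midSet α.2 β.2 π with hGdef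
    set G' := midSet α.2 β.2 π' with hG'def
    -- pointwise equality of the enumerations of G and G'
    have hGk : G.card ≤ k := midSet_card_le_k k α β X hπ
    have hpair : ∀ (i : ℕ) (h : i < G.card) (h' : i < G'.card),
        G.orderEmbOfFin rfl ⟨i, h⟩ = G'.orderEmbOfFin rfl ⟨i, h'⟩ ∧
        π (G.orderEmbOfFin rfl ⟨i, h⟩) = π' (G'.orderEmbOfFin rfl ⟨i, h'⟩) := by
      intro i h h'
      have hik : i < k := lt_of_lt_of_le h hGk
      have h0 : (Φ ⟨π, hπ⟩).2 ⟨i, hik⟩ = (Φ ⟨π', hπ'⟩).2 ⟨i, hik⟩ :=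
        congrFun hfun ⟨i, hik⟩
      have h1 : (Φ ⟨π, hπ⟩).2 ⟨i, hik⟩ =
          (Fin.castSucc (G.orderEmbOfFin rfl ⟨i, h⟩),
           Fin.castSucc (π (G.orderEmbOfFin rfl ⟨i, h⟩))) := dif_pos h
      have h2 : (Φ ⟨π', hπ'⟩).2 ⟨i, hik⟩ =
          (Fin.castSucc (G'.orderEmbOfFin rfl ⟨i, h'⟩),
           Fin.castSucc (π' (G'.orderEmbOfFin rfl ⟨i, h'⟩))) := dif_pos h'
      rw [h1, h2, Prod.mk.injEq] at h0
      exact ⟨Fin.castSucc_inj.mp h0.1, Fin.castSucc_inj.mp h0.2⟩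
    -- G = G'
    have hG : G = G' := by
      apply Finset.coe_injective
      rw [← Finset.range_orderEmbOfFin G rfl, ← Finset.range_orderEmbOfFin G' rfl]
      ext x
      constructor
      · rintro ⟨i, rfl⟩
        have h2 : (i : ℕ) < G'.card := by rw [← hcard]; exact i.2
        exact ⟨⟨(i : ℕ), h2⟩, ((hpair i i.2 h2).1).symm⟩
      · rintro ⟨i, rfl⟩
        have h2 : (i : ℕ) < G.card := by rw [hcard]; exact i.2
        exact ⟨⟨(i : ℕ), h2⟩, (hpair i h2 i.2).1⟩
    -- π = π' on G
    have hπG : ∀ x ∈ G, π x = π' x := by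
      intro x hx
      rw [← Finset.mem_coe, ← Finset.range_orderEmbOfFin G rfl] at hx
      obtain ⟨i, rfl⟩ := hx
      have h2 : (i : ℕ) < G'.card := by rw [← hcard]; exact i.2
      rw [(hpair i i.2 h2).2]
      congr 1
      exact ((hpair i i.2 h2).1).symm
    -- value sets agree
    have hval : valSet π Gᶜ = valSet π' G'ᶜ := by
      have h1 : valSet π' G'ᶜ = valSet π' Gᶜ := by rw [hG]
      rw [h1, valSet_compl, valSet_compl, valSet_congr hπG]
    -- the restricted permutations agree in value
    have hsnd := (Sigma.mk.inj_iff.mp hsig).2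
    have hresval := subtype_perm_heq_apply
      (show n - G.card = n - G'.card by rw [hcard]) hsnd
    -- π = π' off G
    have hπGc : ∀ x ∈ Gᶜ, π x = π' x := by
      intro x hx
      have hx' : x ∈ (↑(Gᶜ) : Set (Fin n)) := hx
      rw [← Finset.range_orderEmbOfFin Gᶜ (hres ⟨π, hπ⟩)] at hx'
      obtain ⟨i, hi⟩ := hx'
      have hi3 : (i : ℕ) < n - G.card := i.2
      have hi2 : (i : ℕ) < n - G'.card := by rw [← hcard]; exact hi3
      have hi' : (G'ᶜ).orderEmbOfFin (hres ⟨π', hπ'⟩) ⟨(i : ℕ), hi2⟩ = x := by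
        rw [← hi]
        exact orderEmbOfFin_val_eq (show G'ᶜ = Gᶜ by rw [hG])
          (hres ⟨π', hπ'⟩) (hres ⟨π, hπ⟩) ⟨(i : ℕ), hi2⟩ i rfl
      have key : π ((Gᶜ).orderEmbOfFin (hres ⟨π, hπ⟩) i) =
          π' ((G'ᶜ).orderEmbOfFin (hres ⟨π', hπ'⟩) ⟨(i : ℕ), hi2⟩) := by
        rw [restrictPerm_apply π Gᶜ (hres ⟨π, hπ⟩) i,
          restrictPerm_apply π' G'ᶜ (hres ⟨π', hπ'⟩) ⟨(i : ℕ), hi2⟩]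
        exact orderEmbOfFin_val_eq hval (valSet_card π Gᶜ (hres ⟨π, hπ⟩))
          (valSet_card π' G'ᶜ (hres ⟨π', hπ'⟩)) _ _ (hresval i ⟨(i : ℕ), hi2⟩ rfl)
      rw [hi, hi'] at key
      exact key
    apply Subtype.ext
    apply Equiv.ext
    intro x
    by_cases hx : x ∈ G
    · exact hπG x hx
    · exact hπGc x (Finset.mem_compl.mpr hx)
  have hcardle := Nat.card_le_card_of_injective Φ hinj
  have hT : Nat.card T = (∑ j : Fin (k + 1), classCount C (n - (j : ℕ))) *
      ((n + 1) * (n + 1)) ^ k := by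
    rw [Nat.card_prod, Nat.card_sigma', Nat.card_fun]
    congr 1
    rw [Nat.card_prod]
    simp [Nat.card_eq_fintype_card]
  rw [← hT]
  exact hcardle

end Counting


section Analysis

open Filter

theorem real_poly_le_exp (m : ℕ) (c r : ℝ) (hr : 1 < r) :
    ∀ᶠ n : ℕ in atTop, c * ((n : ℝ) + 1) ^ m ≤ r ^ n := by
  have hr0 : 0 < r := lt_trans one_pos hr
  have hs : ‖1 / r‖ < 1 := by
    rw [norm_div, norm_one, Real.norm_eq_abs, abs_of_pos hr0, div_lt_one hr0]
    exact hr
  have htend := (summable_norm_pow_mul_geometric_of_norm_lt_one (R := ℝ) m hs).tendsto_atTop_zero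
  have htend2 := (htend.comp (tendsto_add_atTop_nat 1)).const_mul (|c| * r)
  rw [mul_zero] at htend2
  have hev : ∀ᶠ n : ℕ in atTop,
      (|c| * r) * ‖(((n + 1 : ℕ) : ℝ)) ^ m * (1 / r) ^ (n + 1)‖ < 1 :=
    htend2.eventually_lt_const one_pos
  filter_upwards [hev] with n hn
  have hnorm : ‖(((n + 1 : ℕ) : ℝ)) ^ m * (1 / r) ^ (n + 1)‖ =
      ((n : ℝ) + 1) ^ m * (1 / r) ^ (n + 1) := by
    rw [Real.norm_eq_abs, abs_of_nonneg (by positivity)]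
    push_cast
    ring
  rw [hnorm] at hn
  have hrn : (0 : ℝ) < r ^ n := pow_pos hr0 n
  have hpow : (1 / r) ^ (n + 1) = 1 / (r ^ n * r) := by
    rw [div_pow, one_pow, pow_succ]
  rw [hpow] at hn
  have hn' := mul_lt_mul_of_pos_right hn (mul_pos hrn hr0)
  rw [one_mul] at hn'
  have hsimp : |c| * r * (((n : ℝ) + 1) ^ m * (1 / (r ^ n * r))) * (r ^ n * r) =
      |c| * ((n : ℝ) + 1) ^ m * r := by
    field_simp
  rw [hsimp] at hn'
  have hc : |c| * ((n : ℝ) + 1) ^ m < r ^ n := (mul_lt_mul_iff_of_pos_right hr0).mp hn'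
  calc c * ((n : ℝ) + 1) ^ m ≤ |c| * ((n : ℝ) + 1) ^ m :=
        mul_le_mul_of_nonneg_right (le_abs_self c) (by positivity)
    _ ≤ r ^ n := le_of_lt hc

theorem ennreal_poly_le_exp (m : ℕ) (K r : ENNReal) (hK : K ≠ ⊤) (hr : 1 < r) :
    ∀ᶠ n : ℕ in atTop, K * ((((n + 1) * (n + 1)) ^ m : ℕ) : ENNReal) ≤ r ^ n := by
  by_cases hrtop : r = ⊤
  · filter_upwards [eventually_ge_atTop 1] with n hn
    subst hrtop
    rw [ENNReal.top_pow (by omega)]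
    exact le_top
  · have hrr : 1 < r.toReal := by
      have := ENNReal.toReal_strict_mono hrtop hr
      simpa using this
    filter_upwards [real_poly_le_exp (2 * m) K.toReal r.toReal hrr] with n hn
    have h1 : K * ((((n + 1) * (n + 1)) ^ m : ℕ) : ENNReal) =
        ENNReal.ofReal (K.toReal * ((n : ℝ) + 1) ^ (2 * m)) := by
      rw [ENNReal.ofReal_mul ENNReal.toReal_nonneg, ENNReal.ofReal_toReal hK]
      congr 1
      rw [show ((n : ℝ) + 1) ^ (2 * m) = ((((n + 1) * (n + 1)) ^ m : ℕ) : ℝ) by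
        push_cast; rw [pow_mul]; ring]
      exact (ENNReal.ofReal_natCast _).symm
    rw [h1, ← ENNReal.ofReal_toReal (show r ^ n ≠ ⊤ from ENNReal.pow_ne_top hrtop)]
    apply ENNReal.ofReal_le_ofReal
    rw [ENNReal.toReal_pow]
    exact hn

theorem classCount_mono {C D : Set PermSig} (h : C ⊆ D) (n : ℕ) :
    classCount C n ≤ classCount D n :=
  Nat.card_le_card_of_injective
    (fun x : {π : Equiv.Perm (Fin n) // (⟨n, π⟩ : PermSig) ∈ C} =>
      (⟨x.1, h x.2⟩ : {π : Equiv.Perm (Fin n) // (⟨n, π⟩ : PermSig) ∈ D}))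
    (by
      rintro ⟨x, hx⟩ ⟨y, hy⟩ hxy
      simpa [Subtype.ext_iff] using hxy)

theorem growthRate_mono {C D : Set PermSig} (h : C ⊆ D) :
    growthRate C ≤ growthRate D := by
  refine Filter.limsup_le_limsup (Filter.Eventually.of_forall fun n => ?_)
    (by isBoundedDefault) (by isBoundedDefault)
  exact ENNReal.rpow_le_rpow (Nat.cast_le.mpr (classCount_mono h n))
    (one_div_nonneg.mpr (Nat.cast_nonneg n))

theorem growthRate_DClass_le (k : ℕ) (α β : PermSig) (X : Set PermSig) :
    growthRate (DClass k α β X) ≤ growthRate (CClass k α β X) := by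
  by_contra hcon
  rw [not_le] at hcon
  obtain ⟨t, hst, htD⟩ := exists_between hcon
  obtain ⟨t', htt', ht'D⟩ := exists_between htD
  have ht_top : t ≠ ⊤ := htD.ne_top
  have ht'_top : t' ≠ ⊤ := ht'D.ne_top
  have ht0 : t ≠ 0 := (zero_le.trans_lt hst).ne'
  have ht'0 : t' ≠ 0 := (zero_le.trans_lt (hst.trans htt')).ne'
  -- eventually the counts of C are at most t^n
  have hev1 : ∀ᶠ n : ℕ in atTop, (classCount (CClass k α β X) n : ENNReal) ≤ t ^ n := by
    have hev0 : ∀ᶠ n : ℕ in atTop,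
        (classCount (CClass k α β X) n : ENNReal) ^ (1 / (n : ℝ)) < t :=
      Filter.eventually_lt_of_limsup_lt hst
    filter_upwards [hev0, eventually_ge_atTop 1] with n h1 h2
    have hn0 : (n : ℝ) ≠ 0 := Nat.cast_ne_zero.mpr (by omega)
    have hid : (classCount (CClass k α β X) n : ENNReal) =
        ((classCount (CClass k α β X) n : ENNReal) ^ (1 / (n : ℝ))) ^ (n : ℝ) := by
      rw [← ENNReal.rpow_mul, one_div_mul_cancel hn0, ENNReal.rpow_one]
    rw [hid, ← ENNReal.rpow_natCast t n]
    exact ENNReal.rpow_le_rpow h1.le (Nat.cast_nonneg n)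
  obtain ⟨N, hN⟩ := Filter.eventually_atTop.mp hev1
  -- the constant K
  set M : ENNReal := max 1 t⁻¹ with hM
  have hM1 : 1 ≤ M := le_max_left _ _
  have hMtop : M ≠ ⊤ := by
    have h1 : t⁻¹ ≠ ⊤ := ENNReal.inv_ne_top.mpr ht0
    rcases max_choice 1 t⁻¹ with hh | hh <;> rw [hM, hh]
    · exact ENNReal.one_ne_top
    · exact h1
  set K : ENNReal := (k + 1 : ℕ) * M ^ k with hK
  have hKtop : K ≠ ⊤ := by
    exact ENNReal.mul_ne_top (ENNReal.natCast_ne_top _) (ENNReal.pow_ne_top hMtop)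
  have hrgt : 1 < t' / t := by
    rw [ENNReal.lt_div_iff_mul_lt (Or.inl ht0) (Or.inl ht_top), one_mul]
    exact htt'
  have hev2 := ennreal_poly_le_exp k K (t' / t) hKtop hrgt
  -- the main eventual bound
  have hev3 : ∀ᶠ n : ℕ in atTop,
      ((classCount (DClass k α β X) n : ENNReal)) ^ (1 / (n : ℝ)) ≤ t' := by
    filter_upwards [hev2, eventually_ge_atTop (N + k + 1)] with n hpoly hn
    -- each count is at most t^(n-j) ≤ t^n * M^k
    have hterm : ∀ j : Fin (k + 1),
        (classCount (CClass k α β X) (n - (j : ℕ)) : ENNReal) ≤ t ^ n * M ^ k := by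
      intro j
      have hj : (j : ℕ) ≤ k := Nat.lt_succ_iff.mp j.2
      have hnj : N ≤ n - (j : ℕ) := by omega
      have h1 := hN _ hnj
      have h2 : t ^ (n - (j : ℕ)) = t ^ n * (t⁻¹) ^ (j : ℕ) := by
        have harith : n - (j : ℕ) + (j : ℕ) = n := by omega
        conv_rhs => rw [← harith]
        rw [pow_add, mul_assoc, ← mul_pow, ENNReal.mul_inv_cancel ht0 ht_top,
          one_pow, mul_one]
      refine h1.trans ?_
      rw [h2]
      apply mul_le_mul_right
      calc (t⁻¹) ^ (j : ℕ) ≤ M ^ (j : ℕ) := pow_le_pow_left' (le_max_right 1 t⁻¹) _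
        _ ≤ M ^ k := pow_le_pow_right' hM1 hj
    have hsum : (∑ j : Fin (k + 1), (classCount (CClass k α β X) (n - (j : ℕ)) : ENNReal))
        ≤ (k + 1 : ℕ) * (t ^ n * M ^ k) := by
      calc (∑ j : Fin (k + 1), (classCount (CClass k α β X) (n - (j : ℕ)) : ENNReal))
          ≤ ∑ _j : Fin (k + 1), t ^ n * M ^ k := Finset.sum_le_sum (fun j _ => hterm j)
        _ = (k + 1 : ℕ) * (t ^ n * M ^ k) := by
            rw [Finset.sum_const, Finset.card_univ, Fintype.card_fin, nsmul_eq_mul]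
    have hcount := classCount_DClass_le k α β X n
    have hcast : (classCount (DClass k α β X) n : ENNReal) ≤
        (∑ j : Fin (k + 1), (classCount (CClass k α β X) (n - (j : ℕ)) : ENNReal)) *
          ((((n + 1) * (n + 1)) ^ k : ℕ) : ENNReal) := by
      calc (classCount (DClass k α β X) n : ENNReal)
          ≤ (((∑ j : Fin (k + 1), classCount (CClass k α β X) (n - (j : ℕ))) *
              ((n + 1) * (n + 1)) ^ k : ℕ) : ENNReal) := Nat.cast_le.mpr hcount
        _ = _ := by push_cast; ring
    have hmain : (classCount (DClass k α β X) n : ENNReal) ≤ t' ^ n := by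
      calc (classCount (DClass k α β X) n : ENNReal)
          ≤ (∑ j : Fin (k + 1), (classCount (CClass k α β X) (n - (j : ℕ)) : ENNReal)) *
            ((((n + 1) * (n + 1)) ^ k : ℕ) : ENNReal) := hcast
        _ ≤ ((k + 1 : ℕ) * (t ^ n * M ^ k)) *
            ((((n + 1) * (n + 1)) ^ k : ℕ) : ENNReal) := mul_le_mul_left hsum _
        _ = (K * ((((n + 1) * (n + 1)) ^ k : ℕ) : ENNReal)) * t ^ n := by rw [hK]; ring
        _ ≤ ((t' / t) ^ n) * t ^ n := mul_le_mul_left hpoly _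
        _ = t' ^ n := by
            rw [← mul_pow, ENNReal.div_mul_cancel ht0 ht_top]
    calc ((classCount (DClass k α β X) n : ENNReal)) ^ (1 / (n : ℝ))
        ≤ (t' ^ n) ^ (1 / (n : ℝ)) :=
          ENNReal.rpow_le_rpow hmain (one_div_nonneg.mpr (Nat.cast_nonneg n))
      _ = t' := by
          rw [← ENNReal.rpow_natCast t' n, ← ENNReal.rpow_mul,
            mul_one_div_cancel (Nat.cast_ne_zero.mpr (by omega : n ≠ 0) : (n : ℝ) ≠ 0),
            ENNReal.rpow_one]
  have : growthRate (DClass k α β X) ≤ t' := Filter.limsup_le_of_le (by isBoundedDefault) hev3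
  exact absurd (lt_of_lt_of_le ht'D this) (lt_irrefl _)

end Analysis


/-- For any positive `k`, permutations `α`, `β` and set `X` of permutations, the
classes `I_k ∩ Av(X, α ⊕ 1 ⊕ β)` and `I_k ∩ Av(X, α ⊕ 1 ⊕ 1 ⊕ β)` have the same
growth rate. -/
theorem growthRate_av_articulation (k : ℕ) (hk : 0 < k)
    (α β : PermSig) (X : Set PermSig) :
    growthRate (IkClass k ∩ AvClass (X ∪ {DSum α (DSum (iotaSig 1) β)})) =
      growthRate (IkClass k ∩
        AvClass (X ∪ {DSum α (DSum (iotaSig 1) (DSum (iotaSig 1) β))})) := by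
  have heq1 : IkClass k ∩ AvClass (X ∪ {DSum α (DSum (iotaSig 1) β)}) =
      CClass k α β X := rfl
  have heq2 : IkClass k ∩ AvClass (X ∪ {DSum α (DSum (iotaSig 1) (DSum (iotaSig 1) β))}) =
      DClass k α β X := rfl
  rw [heq1, heq2]
  exact le_antisymm (growthRate_mono (CClass_subset_DClass k α β X))
    (growthRate_DClass_le k α β X)
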